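/- arXiv:1408.0776 — 3 statements merged into one kernel-verified Lean document; each statement's English description precedes it below -/
import Mathlib

section
/- Suppose f : [0, ∞) → ℝ is nonnegative, continuously differentiable, satisfies f'(x) = -(32/(9π))^(1/4) * f(x)^(3/4) for all x ≥ 0, and f(z) > 0 at some point z > 0. Then there exist real constants a, b with 4a = -(32/(9π))^(1/4) and b > 0 such that f(x) = (a x + b)^4 on the connected component of {x ≥ 0 : f(x) > 0} containing z. In particular f has compact support on [0, ∞). -/
open Real

theorem stmt3 (f : ℝ → ℝ)
    (hnn : ∀ x : ℝ, 0 ≤ x → 0 ≤ f x)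
    (hc1 : ContDiffOn ℝ 1 f (Set.Ici 0))
    (hode : ∀ x : ℝ, 0 ≤ x →
      deriv f x = -(32 / (9 * π)) ^ ((1 : ℝ) / 4) * (f x) ^ ((3 : ℝ) / 4))
    (z : ℝ) (hz : 0 < z) (hfz : 0 < f z) :
    (∃ a b : ℝ, 4 * a = -(32 / (9 * π)) ^ ((1 : ℝ) / 4) ∧ 0 < b ∧
      ∀ x ∈ connectedComponentIn {x : ℝ | 0 ≤ x ∧ 0 < f x} z, f x = (a * x + b) ^ 4) ∧
    ∃ R : ℝ, ∀ x : ℝ, R ≤ x → f x = 0 := by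
  have hπ : 0 < π := Real.pi_pos
  set c : ℝ := (32 / (9 * π)) ^ ((1 : ℝ) / 4) with hc
  have hcpos : 0 < c := Real.rpow_pos_of_pos (by positivity) _
  set S : Set ℝ := {x : ℝ | 0 ≤ x ∧ 0 < f x} with hSdef
  -- f is antitone on [0, ∞)
  have hdiff : DifferentiableOn ℝ f (Set.Ici 0) := hc1.differentiableOn one_ne_zero
  have hanti : AntitoneOn f (Set.Ici 0) := by
    apply antitoneOn_of_deriv_nonpos (convex_Ici 0) hc1.continuousOn
    · rw [interior_Ici]
      exact fun x hx =>
        ((hdiff.differentiableAt (Ici_mem_nhds hx)).differentiableWithinAt)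
    · intro x hx
      rw [interior_Ici] at hx
      rw [hode x hx.le]
      have h1 : (0:ℝ) ≤ f x ^ ((3:ℝ)/4) := Real.rpow_nonneg (hnn x hx.le) _
      nlinarith
  -- S is convex
  have hSconv : Convex ℝ S := by
    rw [convex_iff_ordConnected]
    constructor
    intro x hx y hy t ht
    refine ⟨le_trans hx.1 ht.1, lt_of_lt_of_le hy.2 ?_⟩
    exact hanti (le_trans hx.1 ht.1) hy.1 ht.2
  -- differentiability at points of S
  have hdiffS : ∀ x, 0 ≤ x → 0 < f x → DifferentiableAt ℝ f x := by
    intro x hx hfx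
    by_contra h
    have h0 : deriv f x = 0 := deriv_zero_of_not_differentiableAt h
    rw [hode x hx] at h0
    have h1 : 0 < f x ^ ((3:ℝ)/4) := Real.rpow_pos_of_pos hfx _
    nlinarith
  set a : ℝ := -c / 4 with ha
  have haneg : a < 0 := by rw [ha]; linarith
  -- derivative of f^{1/4}
  have hga : ∀ x, 0 ≤ x → 0 < f x →
      HasDerivAt (fun y => f y ^ ((1:ℝ)/4)) a x := by
    intro x hx hfx
    have hd := (hdiffS x hx hfx).hasDerivAt
    have h2 := hd.rpow_const (p := (1:ℝ)/4) (Or.inl (ne_of_gt hfx))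
    rw [hode x hx] at h2
    convert h2 using 1
    have h1 : f x ^ ((3:ℝ)/4) * f x ^ ((1:ℝ)/4 - 1) = 1 := by
      rw [← Real.rpow_add hfx]
      norm_num
    have : (-c * f x ^ ((3:ℝ)/4)) * ((1:ℝ)/4) * f x ^ ((1:ℝ)/4 - 1)
        = -c/4 * (f x ^ ((3:ℝ)/4) * f x ^ ((1:ℝ)/4 - 1)) := by ring
    rw [ha, this, h1, mul_one]
  set b : ℝ := f z ^ ((1:ℝ)/4) - a * z with hb
  have hzS : z ∈ S := ⟨hz.le, hfz⟩
  have hbpos : 0 < b := by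
    have h1 : 0 < f z ^ ((1:ℝ)/4) := Real.rpow_pos_of_pos hfz _
    have h2 : 0 < -a * z := mul_pos (by linarith) hz
    rw [hb]; nlinarith
  -- on S, f x = (a x + b)^4
  have key : ∀ x ∈ S, f x = (a * x + b) ^ 4 := by
    intro x hx
    have hconst : f x ^ ((1:ℝ)/4) - a * x = f z ^ ((1:ℝ)/4) - a * z := by
      have hmv := hSconv.norm_image_sub_le_of_norm_hasDerivWithin_le
        (f := fun y => f y ^ ((1:ℝ)/4) - a * y) (f' := fun _ => (0:ℝ)) (C := 0)
        (fun y hy => by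
          have h3 := (hga y hy.1 hy.2).sub ((hasDerivAt_id y).const_mul a)
          simpa [Pi.sub_def] using h3.hasDerivWithinAt)
        (fun y _ => by simp) hzS hx
      simp only [zero_mul, norm_le_zero_iff, sub_eq_zero] at hmv
      exact hmv
    have hgx : f x ^ ((1:ℝ)/4) = a * x + b := by rw [hb]; linarith
    have h4 : ((f x) ^ ((1:ℝ)/4)) ^ (4:ℕ) = f x := by
      rw [← Real.rpow_natCast (f x ^ ((1:ℝ)/4)) 4, ← Real.rpow_mul (hnn x hx.1)]
      norm_num
    rw [← h4, hgx]
  refine ⟨⟨a, b, by rw [ha]; ring, hbpos, fun x hx => key x (connectedComponentIn_subset S z hx)⟩, ?_⟩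
  -- compact support
  refine ⟨-b / a, fun x hx => ?_⟩
  have hR0 : 0 < -b / a := by
    apply div_pos_iff.mpr
    right
    constructor <;> linarith
  have hx0 : (0:ℝ) ≤ x := le_trans hR0.le hx
  by_contra h
  have hfx : 0 < f x := lt_of_le_of_ne (hnn x hx0) (Ne.symm h)
  have hRS : (-b / a) ∈ S := by
    refine ⟨hR0.le, lt_of_lt_of_le hfx ?_⟩
    exact hanti hR0.le hx0 hx
  have := key _ hRS
  have hane : a ≠ 0 := ne_of_lt haneg
  have hzero : a * (-b / a) + b = 0 := by
    field_simp; ring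
  rw [hzero] at this
  simp at this
  exact absurd this (ne_of_gt hRS.2)
end

section
/- Let w : ℝ → ℝ≥0 be twice continuously differentiable on (0, ∞), non-increasing on (0, ∞), satisfying w''(x) = sqrt((2/π) w(x)) for x > 0, with lim_{x→∞} w(x) = 0, lim_{x→∞} w'(x) = 0, and right derivative at 0 equal to -1. Then w(x) = (1/(72π)) ((18π)^(1/3) - x)^4 for 0 < x < (18π)^(1/3) and w(x) = 0 for x ≥ (18π)^(1/3). -/
open Real Filter

/-- constancy from zero derivative on a convex open set -/
lemma my_const_of_deriv_zero {f : ℝ → ℝ} {s : Set ℝ} (hs : Convex ℝ s) (hso : IsOpen s)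
    (hf : ∀ x ∈ s, HasDerivAt f 0 x) {x y : ℝ} (hx : x ∈ s) (hy : y ∈ s) : f x = f y := by
  refine hs.is_const_of_fderivWithin_eq_zero
    (fun z hz => ((hf z hz).differentiableAt).differentiableWithinAt) (fun z hz => ?_) hx hy
  rw [fderivWithin_of_isOpen hso hz, ((hf z hz).hasFDerivAt).fderiv]
  ext t; simp

/-- if C/h tends to L along right-neighborhoods of 0, then C = 0 and L = 0 -/
lemma my_const_div_tendsto {C L : ℝ}
    (h : Tendsto (fun h : ℝ => C / h) (nhdsWithin 0 (Set.Ioi 0)) (nhds L)) : C = 0 ∧ L = 0 := by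
  have hid : Tendsto (fun h : ℝ => h) (nhdsWithin 0 (Set.Ioi 0)) (nhds 0) :=
    tendsto_id.mono_left nhdsWithin_le_nhds
  have hmul : Tendsto (fun h : ℝ => h * (C / h)) (nhdsWithin 0 (Set.Ioi 0)) (nhds (0 * L)) :=
    hid.mul h
  have heq : (fun h : ℝ => h * (C / h)) =ᶠ[nhdsWithin 0 (Set.Ioi 0)] fun _ => C := by
    filter_upwards [self_mem_nhdsWithin] with t ht
    have : t ≠ 0 := ne_of_gt ht
    field_simp
  have hC : C = 0 := by
    have h1 : Tendsto (fun _ : ℝ => C) (nhdsWithin 0 (Set.Ioi 0)) (nhds (0 * L)) :=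
      hmul.congr' heq
    have h2 : Tendsto (fun _ : ℝ => C) (nhdsWithin (0:ℝ) (Set.Ioi 0)) (nhds C) :=
      tendsto_const_nhds
    have := tendsto_nhds_unique h2 h1
    simpa using this
  subst hC
  refine ⟨rfl, ?_⟩
  have h2 : Tendsto (fun h : ℝ => (0:ℝ) / h) (nhdsWithin (0:ℝ) (Set.Ioi 0)) (nhds 0) := by
    simpa using (tendsto_const_nhds : Tendsto (fun _ : ℝ => (0:ℝ)) (nhdsWithin (0:ℝ) (Set.Ioi 0)) (nhds 0))
  exact tendsto_nhds_unique h h2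

theorem stmt4 (w : ℝ → ℝ)
    (hnn : ∀ x : ℝ, 0 ≤ w x)
    (hc2 : ContDiffOn ℝ 2 w (Set.Ioi 0))
    (hmono : AntitoneOn w (Set.Ioi 0))
    (hode : ∀ x : ℝ, 0 < x → deriv (deriv w) x = Real.sqrt ((2 / π) * w x))
    (hlim : Tendsto w atTop (nhds 0))
    (hlim' : Tendsto (deriv w) atTop (nhds 0))
    (hderiv0 : Tendsto (fun h : ℝ => (w h - w 0) / h) (nhdsWithin 0 (Set.Ioi 0)) (nhds (-1))) :
    (∀ x : ℝ, 0 < x → x < (18 * π) ^ ((1 : ℝ) / 3) →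
      w x = (1 / (72 * π)) * ((18 * π) ^ ((1 : ℝ) / 3) - x) ^ 4) ∧
    ∀ x : ℝ, (18 * π) ^ ((1 : ℝ) / 3) ≤ x → w x = 0 := by
  have hπ : (0:ℝ) < π := Real.pi_pos
  set c : ℝ := Real.sqrt (2 / π) with hc
  have hc0 : 0 < c := Real.sqrt_pos.mpr (by positivity)
  set K : ℝ := Real.sqrt (4 / 3 * c) with hK
  have hK0 : 0 < K := Real.sqrt_pos.mpr (by positivity)
  have hK2 : K ^ 2 = 4 / 3 * c := Real.sq_sqrt (by positivity)
  have hK4 : K ^ 4 = 32 / (9 * π) := by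
    have hc2' : c ^ 2 = 2 / π := Real.sq_sqrt (by positivity)
    have : K ^ 4 = (K ^ 2) ^ 2 := by ring
    rw [this, hK2]
    have h2 : (4 / 3 * c) ^ 2 = 16 / 9 * c ^ 2 := by ring
    rw [h2, hc2']
    field_simp
    ring
  have hopen : IsOpen (Set.Ioi (0:ℝ)) := isOpen_Ioi
  -- first derivative
  have hd1 : ∀ x ∈ Set.Ioi (0:ℝ), HasDerivAt w (deriv w x) x := by
    intro x hx
    exact ((hc2.differentiableOn (by norm_num)).differentiableAt
      (hopen.mem_nhds hx)).hasDerivAt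
  -- second derivative
  have hcd1 : ContDiffOn ℝ 1 (deriv w) (Set.Ioi 0) :=
    hc2.deriv_of_isOpen hopen (by norm_num)
  have hd2 : ∀ x ∈ Set.Ioi (0:ℝ), HasDerivAt (deriv w) (deriv (deriv w) x) x := by
    intro x hx
    exact ((hcd1.differentiableOn (by norm_num)).differentiableAt
      (hopen.mem_nhds hx)).hasDerivAt
  -- deriv nonpositive
  have hw'le : ∀ x ∈ Set.Ioi (0:ℝ), deriv w x ≤ 0 := by
    intro x hx
    have hs := hasDerivAt_iff_tendsto_slope.mp (hd1 x hx)
    have hs' : Tendsto (slope w x) (nhdsWithin x (Set.Ioi x)) (nhds (deriv w x)) :=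
      hs.mono_left (nhdsWithin_mono x fun y hy => ne_of_gt hy)
    refine le_of_tendsto hs' ?_
    filter_upwards [self_mem_nhdsWithin] with y hy
    have hxy : x < y := hy
    have hwy : w y ≤ w x := hmono hx (lt_trans hx hxy) (le_of_lt hxy)
    rw [slope_def_field]
    exact div_nonpos_of_nonpos_of_nonneg (by linarith) (by linarith)
  -- energy function
  set E : ℝ → ℝ := fun t => (deriv w t) ^ 2 / 2 - 2 / 3 * c * (w t) ^ ((3:ℝ)/2) with hE
  have hEderiv : ∀ x ∈ Set.Ioi (0:ℝ), HasDerivAt E 0 x := by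
    intro x hx
    have h1 : HasDerivAt (fun t => (deriv w t) ^ 2 / 2)
        ((2 * deriv w x ^ 1 * deriv (deriv w) x) / 2) x := ((hd2 x hx).pow 2).div_const 2
    have hr : HasDerivAt (fun y : ℝ => y ^ ((3:ℝ)/2)) ((3:ℝ)/2 * (w x) ^ ((3:ℝ)/2 - 1)) (w x) :=
      Real.hasDerivAt_rpow_const (Or.inr (by norm_num))
    have h2 : HasDerivAt (fun t => (w t) ^ ((3:ℝ)/2))
        ((3:ℝ)/2 * (w x) ^ ((3:ℝ)/2 - 1) * deriv w x) x := hr.comp x (hd1 x hx)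
    have h3 := h1.sub (h2.const_mul (2 / 3 * c))
    have hodex : deriv (deriv w) x = c * (w x) ^ ((1:ℝ)/2) := by
      rw [hode x hx, Real.sqrt_mul (by positivity) (w x), ← hc, Real.sqrt_eq_rpow]
    have heq : (2 * deriv w x ^ 1 * deriv (deriv w) x) / 2
        - 2 / 3 * c * ((3:ℝ)/2 * (w x) ^ ((3:ℝ)/2 - 1) * deriv w x) = 0 := by
      rw [hodex]
      have : ((3:ℝ)/2 - 1) = (1:ℝ)/2 := by norm_num
      rw [this]; ring
    rw [heq] at h3
    exact h3
  -- energy tends to 0 at infinity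
  have hEtop0 : Tendsto E atTop (nhds 0) := by
    have t1 : Tendsto (fun x => (deriv w x) ^ 2 / 2) atTop (nhds ((0:ℝ)^2 / 2)) :=
      (hlim'.pow 2).div_const 2
    have t2 : Tendsto (fun x => (w x) ^ ((3:ℝ)/2)) atTop (nhds ((0:ℝ) ^ ((3:ℝ)/2))) :=
      (Real.continuousAt_rpow_const 0 ((3:ℝ)/2) (Or.inr (by norm_num))).tendsto.comp hlim
    have t3 := t1.sub (t2.const_mul (2 / 3 * c))
    have : (0:ℝ)^2/2 - 2/3*c*((0:ℝ) ^ ((3:ℝ)/2)) = 0 := by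
      rw [Real.zero_rpow (by norm_num)]; norm_num
    rw [this] at t3
    exact t3
  -- energy is identically 0
  have hEzero : ∀ x ∈ Set.Ioi (0:ℝ), E x = 0 := by
    have hconst : ∀ x ∈ Set.Ioi (0:ℝ), E x = E 1 := fun x hx =>
      my_const_of_deriv_zero (convex_Ioi 0) hopen hEderiv hx (by norm_num)
    have hEtop1 : Tendsto E atTop (nhds (E 1)) := by
      refine tendsto_const_nhds.congr' ?_
      filter_upwards [eventually_gt_atTop 0] with x hx
      exact (hconst x hx).symm
    have h10 : E 1 = 0 := tendsto_nhds_unique hEtop1 hEtop0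
    intro x hx; rw [hconst x hx, h10]
  -- first order ODE
  have hode1 : ∀ x ∈ Set.Ioi (0:ℝ), deriv w x = -(K * (w x) ^ ((3:ℝ)/4)) := by
    intro x hx
    have hsq : (deriv w x) ^ 2 = 4 / 3 * c * (w x) ^ ((3:ℝ)/2) := by
      have := hEzero x hx
      simp only [hE] at this
      linarith
    have h1 : deriv w x = -Real.sqrt ((deriv w x) ^ 2) := by
      rw [Real.sqrt_sq_eq_abs, abs_of_nonpos (hw'le x hx)]; ring
    rw [h1, hsq, Real.sqrt_mul (by positivity), ← hK, Real.sqrt_eq_rpow,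
      ← Real.rpow_mul (hnn x)]
    norm_num
  -- derivative of w^{1/4} + (K/4) x where w > 0
  have huderiv : ∀ x, 0 < x → 0 < w x →
      HasDerivAt (fun t => (w t) ^ ((1:ℝ)/4) + K/4 * t) 0 x := by
    intro x hx hwx
    have hr : HasDerivAt (fun y : ℝ => y ^ ((1:ℝ)/4)) ((1:ℝ)/4 * (w x) ^ ((1:ℝ)/4 - 1)) (w x) :=
      Real.hasDerivAt_rpow_const (Or.inl (ne_of_gt hwx))
    have h1 : HasDerivAt (fun t => (w t) ^ ((1:ℝ)/4))
        ((1:ℝ)/4 * (w x) ^ ((1:ℝ)/4 - 1) * deriv w x) x := hr.comp x (hd1 x hx)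
    have h2 : HasDerivAt (fun t : ℝ => K/4 * t) (K/4) x := by
      simpa using (hasDerivAt_id x).const_mul (K/4)
    have h3 := h1.add h2
    have heq : (1:ℝ)/4 * (w x) ^ ((1:ℝ)/4 - 1) * deriv w x + K/4 = 0 := by
      rw [hode1 x hx]
      have hmm : (w x) ^ ((1:ℝ)/4 - 1) * (w x) ^ ((3:ℝ)/4) = 1 := by
        rw [← Real.rpow_add hwx]
        norm_num
      calc (1:ℝ)/4 * (w x) ^ ((1:ℝ)/4 - 1) * -(K * (w x) ^ ((3:ℝ)/4)) + K/4
          = -(K/4) * ((w x) ^ ((1:ℝ)/4 - 1) * (w x) ^ ((3:ℝ)/4)) + K/4 := by ring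
        _ = 0 := by rw [hmm]; ring
    rw [heq] at h3
    exact h3
  -- the zero set is nonempty
  set S : Set ℝ := {x : ℝ | 0 < x ∧ w x = 0} with hS
  have hSup : ∀ x ∈ S, ∀ y, x ≤ y → w y = 0 := by
    intro x hx y hxy
    have : w y ≤ w x := hmono hx.1 (lt_of_lt_of_le hx.1 hxy) hxy
    have := hnn y
    rw [hx.2] at *
    linarith
  have hSne : S.Nonempty := by
    by_contra hemp
    push_neg at hemp
    have hpos : ∀ x, 0 < x → 0 < w x := by
      intro x hx
      rcases lt_or_eq_of_le (hnn x) with h | h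
      · exact h
      · exfalso
        have hxS : x ∈ S := ⟨hx, h.symm⟩
        rw [hemp] at hxS
        exact hxS
    set u : ℝ → ℝ := fun t => (w t) ^ ((1:ℝ)/4) + K/4 * t with hu
    have hconst : ∀ x ∈ Set.Ioi (0:ℝ), u x = u 1 := fun x hx =>
      my_const_of_deriv_zero (convex_Ioi 0) hopen
        (fun z hz => huderiv z hz (hpos z hz)) hx (by norm_num)
    set X : ℝ := max 1 (4 * u 1 / K) + 1 with hX
    have hX1 : (1:ℝ) ≤ max 1 (4 * u 1 / K) := le_max_left _ _
    have hXpos : 0 < X := by simp only [hX]; linarith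
    have h1 := hconst X hXpos
    have h2 : (0:ℝ) ≤ (w X) ^ ((1:ℝ)/4) := Real.rpow_nonneg (hnn X) _
    have h3 : 4 * u 1 / K < X := by
      have := le_max_right 1 (4 * u 1 / K)
      simp only [hX]; linarith
    have h4 : 4 * u 1 < K * X := by
      rw [div_lt_iff₀ hK0] at h3; linarith [h3]
    have hu1 : u 1 = w 1 ^ ((1:ℝ)/4) + K/4 * 1 := rfl
    rw [hu1] at h4
    simp only [hu] at h1
    nlinarith
  have hSbdd : BddBelow S := ⟨0, fun x hx => le_of_lt hx.1⟩
  set b : ℝ := sInf S with hb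
  have hb0 : 0 ≤ b := le_csInf hSne fun x hx => le_of_lt hx.1
  have hzero : ∀ x, b < x → w x = 0 := by
    intro x hx
    obtain ⟨s, hsS, hsx⟩ := exists_lt_of_csInf_lt hSne hx
    exact hSup s hsS x (le_of_lt hsx)
  have hbpos : 0 < b := by
    rcases lt_or_eq_of_le hb0 with h | h
    · exact h
    exfalso
    have hzero' : ∀ x, 0 < x → w x = 0 := fun x hx => hzero x (by rw [← h]; exact hx)
    have heq : (fun h : ℝ => (w h - w 0) / h) =ᶠ[nhdsWithin 0 (Set.Ioi 0)]
        fun h : ℝ => (0 - w 0) / h := by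
      filter_upwards [self_mem_nhdsWithin] with t ht
      rw [hzero' t ht]
    have := hderiv0.congr' heq
    obtain ⟨-, hL⟩ := my_const_div_tendsto (C := 0 - w 0) (L := -1) this
    norm_num at hL
  have hpos : ∀ x, 0 < x → x < b → 0 < w x := by
    intro x hx hxb
    rcases lt_or_eq_of_le (hnn x) with h | h
    · exact h
    · exact absurd (csInf_le hSbdd ⟨hx, h.symm⟩) (not_le.mpr hxb)
  have hwb : w b = 0 := by
    have hcont : ContinuousAt w b := (hc2.continuousOn.continuousAt (hopen.mem_nhds hbpos))
    have h1 : Tendsto w (nhdsWithin b (Set.Ioi b)) (nhds (w b)) :=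
      hcont.continuousWithinAt.tendsto
    have h2 : Tendsto w (nhdsWithin b (Set.Ioi b)) (nhds 0) := by
      refine tendsto_const_nhds.congr' ?_
      filter_upwards [self_mem_nhdsWithin] with t ht
      exact (hzero t ht).symm
    exact tendsto_nhds_unique h1 h2
  -- w on (0, b)
  have hform : ∀ x, 0 < x → x < b → w x = (K/4 * (b - x)) ^ 4 := by
    have hconvex : Convex ℝ (Set.Ioo (0:ℝ) b) := convex_Ioo 0 b
    have hopen' : IsOpen (Set.Ioo (0:ℝ) b) := isOpen_Ioo
    set u : ℝ → ℝ := fun t => (w t) ^ ((1:ℝ)/4) + K/4 * t with hu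
    have hconst : ∀ x ∈ Set.Ioo (0:ℝ) b, ∀ y ∈ Set.Ioo (0:ℝ) b, u x = u y := by
      intro x hx y hy
      exact my_const_of_deriv_zero hconvex hopen'
        (fun z hz => huderiv z hz.1 (hpos z hz.1 hz.2)) hx hy
    -- u tends to u b along left-neighborhoods, and u = const on Ioo 0 b
    have hucont : ContinuousAt u b := by
      have hwc : ContinuousAt w b := hc2.continuousOn.continuousAt (hopen.mem_nhds hbpos)
      have h1 : ContinuousAt (fun y : ℝ => y ^ ((1:ℝ)/4)) (w b) := by
        apply Real.continuousAt_rpow_const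
        right; norm_num
      exact ((h1.comp hwc).add ((continuous_const.mul continuous_id).continuousAt))
    have hub : u b = K/4 * b := by
      simp only [hu, hwb, Real.zero_rpow (by norm_num : ((1:ℝ)/4) ≠ 0)]
      ring
    intro x hx hxb
    have hxm : x ∈ Set.Ioo (0:ℝ) b := ⟨hx, hxb⟩
    have huxb : u x = u b := by
      have h1 : Tendsto u (nhdsWithin b (Set.Iio b)) (nhds (u b)) :=
        hucont.continuousWithinAt.tendsto
      have h2 : Tendsto u (nhdsWithin b (Set.Iio b)) (nhds (u x)) := by
        refine tendsto_const_nhds.congr' ?_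
        have hmem : Set.Ioi (0:ℝ) ∈ nhdsWithin b (Set.Iio b) :=
          nhdsWithin_le_nhds (hopen.mem_nhds hbpos)
        filter_upwards [self_mem_nhdsWithin, hmem] with t ht ht0
        exact (hconst x hxm t ⟨ht0, ht⟩)
      exact tendsto_nhds_unique h2 h1
    have hux : (w x) ^ ((1:ℝ)/4) = K/4 * (b - x) := by
      have h5 : u x = K/4 * b := huxb.trans hub
      simp only [hu] at h5
      linarith
    have hw4 : w x = ((w x) ^ ((1:ℝ)/4)) ^ (4:ℕ) := by
      rw [← Real.rpow_natCast ((w x) ^ ((1:ℝ)/4)) 4, ← Real.rpow_mul (hnn x)]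
      norm_num
    rw [hw4, hux]
  -- determine b via boundary condition
  have hKq : (K/4) ^ 4 = 1 / (72 * π) := by
    have : (K/4) ^ 4 = K ^ 4 / 256 := by ring
    rw [this, hK4]
    field_simp
    ring
  have hb3 : b ^ 3 = 18 * π := by
    set g : ℝ → ℝ := fun h => (K/4 * (b - h)) ^ 4 with hg
    have hgderiv : HasDerivAt g (4 * (K/4 * b) ^ 3 * (-(K/4))) 0 := by
      have h1 : HasDerivAt (fun h : ℝ => K/4 * (b - h)) (-(K/4)) 0 := by
        have := ((hasDerivAt_id (0:ℝ)).const_sub b).const_mul (K/4)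
        simpa using this
      have h2 := h1.pow 4
      simpa [Pi.pow_def] using h2
    have hslope : Tendsto (fun h : ℝ => (g h - g 0) / h) (nhdsWithin 0 (Set.Ioi 0))
        (nhds (4 * (K/4 * b) ^ 3 * (-(K/4)))) := by
      have h1 := hasDerivAt_iff_tendsto_slope.mp hgderiv
      have h2 : Tendsto (slope g 0) (nhdsWithin 0 (Set.Ioi 0))
          (nhds (4 * (K/4 * b) ^ 3 * (-(K/4)))) :=
        h1.mono_left (nhdsWithin_mono 0 fun y hy => ne_of_gt hy)
      exact h2.congr fun t => by rw [slope_def_field, sub_zero]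
    have hdiff : Tendsto (fun h : ℝ => (g 0 - w 0) / h) (nhdsWithin 0 (Set.Ioi 0))
        (nhds (-1 - 4 * (K/4 * b) ^ 3 * (-(K/4)))) := by
      have h1 := hderiv0.sub hslope
      refine h1.congr' ?_
      have hmem : Set.Iio b ∈ nhdsWithin (0:ℝ) (Set.Ioi 0) :=
        nhdsWithin_le_nhds (Iio_mem_nhds hbpos)
      filter_upwards [self_mem_nhdsWithin, hmem] with t ht htb
      have : w t = g t := hform t ht htb
      rw [this]
      have ht0 : (t:ℝ) ≠ 0 := ne_of_gt ht
      field_simp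
      ring
    obtain ⟨hC, hL⟩ := my_const_div_tendsto hdiff
    have hbeq : 4 * (K/4) ^ 4 * b ^ 3 = 1 := by linear_combination hL
    rw [hKq] at hbeq
    field_simp at hbeq
    linarith
  have ha3 : ((18 * π) ^ ((1:ℝ)/3)) ^ 3 = 18 * π := by
    rw [← Real.rpow_natCast ((18 * π) ^ ((1:ℝ)/3)) 3, ← Real.rpow_mul (by positivity)]
    norm_num
  have hba : b = (18 * π) ^ ((1:ℝ)/3) := by
    have ha0 : 0 ≤ (18 * π) ^ ((1:ℝ)/3) := Real.rpow_nonneg (by positivity) _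
    rcases lt_trichotomy b ((18 * π) ^ ((1:ℝ)/3)) with h | h | h
    · exact absurd (hb3.trans ha3.symm) (ne_of_lt (pow_lt_pow_left₀ h hb0 (by norm_num)))
    · exact h
    · exact absurd (ha3.trans hb3.symm) (ne_of_lt (pow_lt_pow_left₀ h ha0 (by norm_num)))
  constructor
  · intro x hx hxa
    rw [hform x hx (by rw [hba]; exact hxa)]
    rw [mul_pow, hKq, hba]
  · intro x hxa
    rcases lt_or_eq_of_le hxa with h | h
    · exact hzero x (by rw [hba]; exact h)
    · rw [← h, ← hba]; exact hwb
end

section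
/- Let (Z_i)_{i ∈ I} be independent uniform {−1,+1}-valued random variables indexed by a countable set I. Let i_1, i_2, … ∈ I be a sequence of pairwise distinct random indices and ξ_1, ξ_2, … a sequence of {−1,+1}-valued random variables such that for every k ≥ 1, both i_k and ξ_k are measurable with respect to the σ-algebra generated by Z_{i_1}, …, Z_{i_{k−1}}. Then the sequence (ξ_k · Z_{i_k})_{k ≥ 1} is i.i.d. with each term uniform on {−1,+1}. -/
open MeasureTheory ProbabilityTheory

theorem stmt5 {Ω : Type*} [MeasurableSpace Ω] (μ : Measure Ω) [IsProbabilityMeasure μ]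
    {I : Type*} [Countable I] [MeasurableSpace I] [MeasurableSingletonClass I]
    (Z : I → Ω → ℝ) (hZmeas : ∀ i, Measurable (Z i))
    (hZindep : iIndepFun Z μ)
    (hZunif : ∀ i, μ {ω | Z i ω = 1} = 1 / 2 ∧ μ {ω | Z i ω = -1} = 1 / 2)
    (idx : ℕ → Ω → I) (ξ : ℕ → Ω → ℝ)
    (hξval : ∀ k ω, ξ k ω = 1 ∨ ξ k ω = -1)
    (hdistinct : ∀ ω (k l : ℕ), k ≠ l → idx k ω ≠ idx l ω)
    (F : ℕ → MeasurableSpace Ω)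
    (hF : ∀ k, F k = ⨆ l ∈ Finset.range k,
      MeasurableSpace.comap (fun ω => Z (idx l ω) ω) inferInstance)
    (hidxmeas : ∀ k (j : I), MeasurableSet[F k] {ω | idx k ω = j})
    (hξmeas : ∀ k, Measurable[F k] (ξ k)) :
    iIndepFun (fun k ω => ξ k ω * Z (idx k ω) ω) μ ∧
    ∀ k : ℕ, μ {ω | ξ k ω * Z (idx k ω) ω = 1} = 1 / 2 ∧
      μ {ω | ξ k ω * Z (idx k ω) ω = -1} = 1 / 2 := by
  classical
  -- monotonicity of the filtration
  have hFmono : ∀ {k n : ℕ}, k ≤ n → F k ≤ F n := by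
    intro k n hkn
    rw [hF, hF]
    exact biSup_mono fun l hl =>
      Finset.mem_range.2 (lt_of_lt_of_le (Finset.mem_range.1 hl) hkn)
  -- the filtration is below the ambient σ-algebra
  have hFle : ∀ n, F n ≤ ‹MeasurableSpace Ω› := by
    intro n
    induction n using Nat.strong_induction_on with
    | _ n ih =>
      rw [hF]
      refine iSup₂_le fun l hl => ?_
      rw [Finset.mem_range] at hl
      have hidx : Measurable (idx l) :=
        measurable_to_countable' fun j => ih l hl _ (hidxmeas l j)
      have hW : Measurable (fun ω => Z (idx l ω) ω) :=
        (measurable_from_prod_countable_left (f := fun p : Ω × I => Z p.2 p.1)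
          (fun i => hZmeas i)).comp (measurable_id.prodMk hidx)
      exact hW.comap_le
  have hidxM : ∀ l, Measurable (idx l) := fun l =>
    measurable_to_countable' fun j => hFle l _ (hidxmeas l j)
  have hWF : ∀ l, Measurable[F (l + 1)] (fun ω => Z (idx l ω) ω) := by
    intro l
    refine Measurable.of_comap_le ?_
    rw [hF]
    exact le_iSup₂ (f := fun l' (_ : l' ∈ Finset.range (l + 1)) =>
      MeasurableSpace.comap (fun ω => Z (idx l' ω) ω) inferInstance) l
      (Finset.self_mem_range_succ l)
  have hYF : ∀ k, Measurable[F (k + 1)] (fun ω => ξ k ω * Z (idx k ω) ω) := fun k =>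
    Measurable.mul ((hξmeas k).mono (hFmono (Nat.le_succ k)) le_rfl) (hWF k)
  have hYM : ∀ k, Measurable (fun ω => ξ k ω * Z (idx k ω) ω) := fun k =>
    (hYF k).mono (hFle (k + 1)) le_rfl
  -- key structural claim
  have claim : ∀ (n : ℕ) (h : ℕ → I) (A : Set Ω), MeasurableSet[F n] A →
      MeasurableSet[⨆ l ∈ Finset.range n, MeasurableSpace.comap (Z (h l)) inferInstance]
        (A ∩ ⋂ l ∈ Finset.range n, {ω | idx l ω = h l}) := by
    intro n
    induction n with
    | zero =>
      intro h A hA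
      rw [hF] at hA
      have hbot : (⨆ l ∈ Finset.range 0,
          MeasurableSpace.comap (fun ω => Z (idx l ω) ω) inferInstance)
          = (⊥ : MeasurableSpace Ω) := by simp
      rw [hbot] at hA
      rcases MeasurableSpace.measurableSet_bot_iff.1 hA with rfl | rfl
      · simp
      · simp only [Set.univ_inter, Finset.range_zero]
        simp
    | succ n ih =>
      intro h A hA
      have hGmono : (⨆ l ∈ Finset.range n, MeasurableSpace.comap (Z (h l)) inferInstance)
          ≤ ⨆ l ∈ Finset.range (n + 1), MeasurableSpace.comap (Z (h l)) inferInstance :=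
        biSup_mono fun l hl =>
          Finset.mem_range.2 (Nat.lt_succ_of_lt (Finset.mem_range.1 hl))
      have hE' : MeasurableSet[⨆ l ∈ Finset.range (n + 1),
          MeasurableSpace.comap (Z (h l)) inferInstance]
          (⋂ l ∈ Finset.range (n + 1), {ω | idx l ω = h l}) := by
        have h1 := ih h {ω | idx n ω = h n} (hidxmeas n (h n))
        have heq : (⋂ l ∈ Finset.range (n + 1), {ω | idx l ω = h l})
            = {ω | idx n ω = h n} ∩ ⋂ l ∈ Finset.range n, {ω | idx l ω = h l} := by
          rw [Finset.range_add_one, Finset.set_biInter_insert]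
        rw [heq]
        exact hGmono _ h1
      set Gs : MeasurableSpace Ω :=
        ⨆ l ∈ Finset.range (n + 1), MeasurableSpace.comap (Z (h l)) inferInstance with hGs
      set Es : Set Ω := ⋂ l ∈ Finset.range (n + 1), {ω | idx l ω = h l} with hEs
      let m : MeasurableSpace Ω :=
        { MeasurableSet' := fun A => MeasurableSet[Gs] (A ∩ Es)
          measurableSet_empty := by
            simpa using (MeasurableSet.empty : MeasurableSet[Gs] ∅)
          measurableSet_compl := by
            intro A hA
            have heq : Aᶜ ∩ Es = Es \ (A ∩ Es) := by
              ext ω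
              simp only [Set.mem_inter_iff, Set.mem_compl_iff, Set.mem_diff]
              tauto
            rw [heq]
            exact hE'.diff hA
          measurableSet_iUnion := by
            intro f hf
            have heq : (⋃ i, f i) ∩ Es = ⋃ i, (f i ∩ Es) := by
              rw [Set.iUnion_inter]
            rw [heq]
            exact MeasurableSet.iUnion hf }
      have hle : F (n + 1) ≤ m := by
        rw [hF]
        refine iSup₂_le fun l hl => ?_
        intro A hA
        obtain ⟨S, hS, rfl⟩ := hA
        show MeasurableSet[Gs] (((fun ω => Z (idx l ω) ω) ⁻¹' S) ∩ Es)
        have hidxe : ∀ ω, ω ∈ Es → idx l ω = h l := by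
          intro ω hω
          rw [hEs] at hω
          simp only [Set.mem_iInter, Set.mem_setOf_eq] at hω
          exact hω l hl
        have hset : ((fun ω => Z (idx l ω) ω) ⁻¹' S) ∩ Es = (Z (h l) ⁻¹' S) ∩ Es := by
          ext ω
          simp only [Set.mem_inter_iff, Set.mem_preimage]
          constructor
          · rintro ⟨h1, h2⟩
            refine ⟨?_, h2⟩
            rw [← hidxe ω h2]
            exact h1
          · rintro ⟨h1, h2⟩
            refine ⟨?_, h2⟩
            rw [hidxe ω h2]
            exact h1
        rw [hset]
        refine MeasurableSet.inter ?_ hE'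
        refine le_iSup₂ (f := fun l' (_ : l' ∈ Finset.range (n + 1)) =>
          MeasurableSpace.comap (Z (h l')) inferInstance) l hl _ ?_
        exact ⟨S, hS, rfl⟩
      exact hle A hA
  -- the key lemma: one more step conditionally uniform
  have keyL : ∀ (n : ℕ) (A : Set Ω), MeasurableSet[F n] A → ∀ ε : ℝ, ε = 1 ∨ ε = -1 →
      μ (A ∩ {ω | ξ n ω * Z (idx n ω) ω = ε}) = μ A / 2 := by
    intro n A hA ε hε
    have hAm : MeasurableSet A := hFle n _ hA
    have hYnm : Measurable (fun ω => ξ n ω * Z (idx n ω) ω) := hYM n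
    set Ev : (Fin (n + 1) → I) → Set Ω :=
      fun v => ⋂ l : Fin (n + 1), {ω | idx l ω = v l} with hEvdef
    have hEvm : ∀ v, MeasurableSet (Ev v) := fun v =>
      MeasurableSet.iInter fun l => hFle l _ (hidxmeas l (v l))
    have hEvdisj : Pairwise (Function.onFun Disjoint Ev) := by
      intro v v' hvv'
      obtain ⟨l, hl⟩ := Function.ne_iff.1 hvv'
      refine Set.disjoint_left.2 fun ω hω hω' => ?_
      have h1 : idx l ω = v l := by
        have := Set.mem_iInter.1 hω l; exact this
      have h2 : idx l ω = v' l := by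
        have := Set.mem_iInter.1 hω' l; exact this
      exact hl (h1 ▸ h2)
    have hEvcover : ⋃ v, Ev v = Set.univ := by
      ext ω
      simp only [Set.mem_univ, iff_true, Set.mem_iUnion]
      exact ⟨fun l => idx l ω, Set.mem_iInter.2 fun l => rfl⟩
    have hperv : ∀ v : Fin (n + 1) → I,
        μ (A ∩ {ω | ξ n ω * Z (idx n ω) ω = ε} ∩ Ev v) = μ (A ∩ Ev v) / 2 := by
      intro v
      by_cases hvinj : Function.Injective v
      · set j : I := v (Fin.last n) with hj
        set h : ℕ → I := fun l => if hl : l < n + 1 then v ⟨l, hl⟩ else v (Fin.last n) with hh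
        have hhl : ∀ l : Fin (n + 1), h l = v l := by
          intro l
          rw [hh]
          exact dif_pos l.isLt
        have hEvE : Ev v = ⋂ l ∈ Finset.range (n + 1), {ω | idx l ω = h l} := by
          ext ω
          simp only [hEvdef, Set.mem_iInter, Set.mem_setOf_eq, Finset.mem_range]
          constructor
          · intro hx l hl
            have h1 : h l = v ⟨l, hl⟩ := by rw [hh]; exact dif_pos hl
            rw [h1]
            exact hx ⟨l, hl⟩
          · intro hx l
            rw [← hhl l]
            exact hx l l.isLt
        have hidxn : ∀ ω, ω ∈ Ev v → idx n ω = j := by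
          intro ω hω
          have := Set.mem_iInter.1 hω (Fin.last n)
          simpa [Fin.val_last] using this
        set B : ℝ → Set Ω := fun s => A ∩ Ev v ∩ {ω | ξ n ω = s} with hB
        have hBG : ∀ s : ℝ, MeasurableSet[⨆ l ∈ Finset.range n,
            MeasurableSpace.comap (Z (h l)) inferInstance] (B s) := by
          intro s
          have hξs : MeasurableSet[F n] {ω | ξ n ω = s} :=
            hξmeas n (measurableSet_singleton s)
          have hA' : MeasurableSet[F n]
              ((A ∩ {ω | ξ n ω = s}) ∩ {ω | idx n ω = h n}) :=
            (hA.inter hξs).inter (hidxmeas n (h n))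
          have hclaim := claim n h _ hA'
          have hseta : B s = ((A ∩ {ω | ξ n ω = s}) ∩ {ω | idx n ω = h n})
              ∩ ⋂ l ∈ Finset.range n, {ω | idx l ω = h l} := by
            rw [hB, hEvE, Finset.range_add_one, Finset.set_biInter_insert]
            ext ω
            simp only [Set.mem_inter_iff, Set.mem_setOf_eq]
            tauto
          rw [hseta]
          exact hclaim
        have hTindep : Indep
            (⨆ i ∈ h '' {l : ℕ | l < n}, MeasurableSpace.comap (Z i) inferInstance)
            (⨆ i ∈ (h '' {l : ℕ | l < n})ᶜ, MeasurableSpace.comap (Z i) inferInstance) μ :=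
          indep_biSup_compl (fun i => (hZmeas i).comap_le) hZindep.iIndep _
        have hGle2 : (⨆ l ∈ Finset.range n, MeasurableSpace.comap (Z (h l)) inferInstance)
            ≤ ⨆ i ∈ (h '' {l : ℕ | l < n}), MeasurableSpace.comap (Z i) inferInstance :=
          iSup₂_le fun l hl => le_iSup₂ (f := fun i (_ : i ∈ h '' {l : ℕ | l < n}) =>
            MeasurableSpace.comap (Z i) inferInstance) (h l)
            ⟨l, Finset.mem_range.1 hl, rfl⟩
        have hjnot : j ∉ h '' {l : ℕ | l < n} := by
          rintro ⟨l, hl, hlj⟩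
          simp only [Set.mem_setOf_eq] at hl
          have hl' : l < n + 1 := Nat.lt_succ_of_lt hl
          rw [hh] at hlj
          simp only [hl', dif_pos] at hlj
          have heq := hvinj hlj
          have : l = n := congrArg Fin.val heq
          omega
        have hZjle : MeasurableSpace.comap (Z j) inferInstance
            ≤ ⨆ i ∈ (h '' {l : ℕ | l < n})ᶜ, MeasurableSpace.comap (Z i) inferInstance :=
          le_iSup₂ (f := fun i (_ : i ∈ (h '' {l : ℕ | l < n})ᶜ) =>
            MeasurableSpace.comap (Z i) inferInstance) j hjnot
        have hkey : ∀ s c : ℝ, c = 1 ∨ c = -1 →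
            μ (B s ∩ {ω | Z j ω = c}) = μ (B s) / 2 := by
          intro s c hc
          have hmeasB := hGle2 _ (hBG s)
          have hmeasZ : MeasurableSet[⨆ i ∈ (h '' {l : ℕ | l < n})ᶜ,
              MeasurableSpace.comap (Z i) inferInstance] {ω | Z j ω = c} :=
            hZjle _ ⟨{c}, measurableSet_singleton c, rfl⟩
          have hmul := (Indep_iff _ _ μ).1 hTindep _ _ hmeasB hmeasZ
          rw [hmul]
          rcases hc with rfl | rfl
          · rw [(hZunif j).1, mul_one_div]
          · rw [(hZunif j).2, mul_one_div]
        have hBm : ∀ s : ℝ, MeasurableSet (B s) := fun s =>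
          (hAm.inter (hEvm v)).inter
            (((hξmeas n).mono (hFle n) le_rfl) (measurableSet_singleton s))
        have hBunion : A ∩ Ev v = B 1 ∪ B (-1) := by
          ext ω
          simp only [hB, Set.mem_union, Set.mem_inter_iff, Set.mem_setOf_eq]
          constructor
          · intro hω
            rcases hξval n ω with h1 | h1
            exacts [Or.inl ⟨hω, h1⟩, Or.inr ⟨hω, h1⟩]
          · rintro (⟨hω, _⟩ | ⟨hω, _⟩) <;> exact hω
        have hBdisj : Disjoint (B 1) (B (-1)) := by
          refine Set.disjoint_left.2 fun ω h1 h2 => ?_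
          have e1 : ξ n ω = 1 := h1.2
          have e2 : ξ n ω = -1 := h2.2
          rw [e1] at e2
          norm_num at e2
        have hsplit : A ∩ {ω | ξ n ω * Z (idx n ω) ω = ε} ∩ Ev v
            = (B 1 ∩ {ω | Z j ω = ε}) ∪ (B (-1) ∩ {ω | Z j ω = -ε}) := by
          ext ω
          simp only [hB, Set.mem_union, Set.mem_inter_iff, Set.mem_setOf_eq]
          constructor
          · rintro ⟨⟨hωA, hωY⟩, hωE⟩
            have hj' : idx n ω = j := hidxn ω hωE
            rw [hj'] at hωY
            rcases hξval n ω with h1 | h1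
            · left
              refine ⟨⟨⟨hωA, hωE⟩, h1⟩, ?_⟩
              rw [h1, one_mul] at hωY
              exact hωY
            · right
              refine ⟨⟨⟨hωA, hωE⟩, h1⟩, ?_⟩
              rw [h1] at hωY
              linarith
          · rintro (⟨⟨⟨hωA, hωE⟩, h1⟩, hz⟩ | ⟨⟨⟨hωA, hωE⟩, h1⟩, hz⟩)
            · refine ⟨⟨hωA, ?_⟩, hωE⟩
              rw [h1, hidxn ω hωE, one_mul]
              exact hz
            · refine ⟨⟨hωA, ?_⟩, hωE⟩
              rw [h1, hidxn ω hωE]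
              linarith
        have hsplitdisj : Disjoint (B 1 ∩ {ω | Z j ω = ε}) (B (-1) ∩ {ω | Z j ω = -ε}) :=
          hBdisj.mono Set.inter_subset_left Set.inter_subset_left
        rw [hsplit, measure_union hsplitdisj
          ((hBm (-1)).inter (hZmeas j (measurableSet_singleton (-ε)))),
          hkey 1 ε hε, hkey (-1) (-ε) (by rcases hε with rfl | rfl <;> norm_num),
          hBunion, measure_union hBdisj (hBm (-1)), ENNReal.div_add_div_same]
      · -- non-injective history is impossible
        have hEvempty : Ev v = ∅ := by
          rw [Set.eq_empty_iff_forall_notMem]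
          intro ω hω
          rw [Function.not_injective_iff] at hvinj
          obtain ⟨k, l, hkl, hne⟩ := hvinj
          have h1 : idx k ω = v k := Set.mem_iInter.1 hω k
          have h2 : idx l ω = v l := Set.mem_iInter.1 hω l
          refine hdistinct ω k l (fun hkl' => hne (Fin.val_injective hkl')) ?_
          rw [h1, h2, hkl]
        simp [hEvempty]
    -- sum over the partition
    have hYsm : MeasurableSet {ω | ξ n ω * Z (idx n ω) ω = ε} :=
      hYnm (measurableSet_singleton ε)
    have e1 : A ∩ {ω | ξ n ω * Z (idx n ω) ω = ε}
        = ⋃ v, (A ∩ {ω | ξ n ω * Z (idx n ω) ω = ε} ∩ Ev v) := by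
      conv_lhs => rw [← Set.inter_univ (A ∩ {ω | ξ n ω * Z (idx n ω) ω = ε})]
      rw [← hEvcover, Set.inter_iUnion]
    have e2 : A = ⋃ v, (A ∩ Ev v) := by
      conv_lhs => rw [← Set.inter_univ A]
      rw [← hEvcover, Set.inter_iUnion]
    calc μ (A ∩ {ω | ξ n ω * Z (idx n ω) ω = ε})
        = ∑' v, μ (A ∩ {ω | ξ n ω * Z (idx n ω) ω = ε} ∩ Ev v) := by
          conv_lhs => rw [e1]
          exact measure_iUnion
            (fun v v' hne => ((hEvdisj hne).mono Set.inter_subset_right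
              Set.inter_subset_right))
            (fun v => (hAm.inter hYsm).inter (hEvm v))
      _ = ∑' v, μ (A ∩ Ev v) / 2 := tsum_congr hperv
      _ = (∑' v, μ (A ∩ Ev v)) / 2 := by
          simp_rw [div_eq_mul_inv]
          rw [ENNReal.tsum_mul_right]
      _ = μ A / 2 := by
          rw [← measure_iUnion
            (fun v v' hne => ((hEvdisj hne).mono Set.inter_subset_right
              Set.inter_subset_right))
            (fun v => hAm.inter (hEvm v)), ← e2]
  -- uniform distribution
  have hunif : ∀ (k : ℕ) (ε : ℝ), ε = 1 ∨ ε = -1 →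
      μ {ω | ξ k ω * Z (idx k ω) ω = ε} = 1 / 2 := by
    intro k ε hε
    have := keyL k Set.univ MeasurableSet.univ ε hε
    simpa [measure_univ] using this
  -- product form of the key lemma
  have keyL' : ∀ (n : ℕ) (A : Set Ω), MeasurableSet[F n] A → ∀ T : Set ℝ, MeasurableSet T →
      μ (A ∩ (fun ω => ξ n ω * Z (idx n ω) ω) ⁻¹' T)
        = μ A * μ ((fun ω => ξ n ω * Z (idx n ω) ω) ⁻¹' T) := by
    intro n A hA T hT
    have hYnm : Measurable (fun ω => ξ n ω * Z (idx n ω) ω) := hYM n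
    have hU : MeasurableSet ({ω | ξ n ω * Z (idx n ω) ω = 1}
        ∪ {ω | ξ n ω * Z (idx n ω) ω = -1}) :=
      (hYnm (measurableSet_singleton 1)).union (hYnm (measurableSet_singleton (-1)))
    have hUdisj : Disjoint {ω | ξ n ω * Z (idx n ω) ω = 1}
        {ω | ξ n ω * Z (idx n ω) ω = -1} := by
      refine Set.disjoint_left.2 fun ω h1 h2 => ?_
      simp only [Set.mem_setOf_eq] at h1 h2
      rw [h1] at h2
      norm_num at h2
    have hUfull : μ ({ω | ξ n ω * Z (idx n ω) ω = 1}
        ∪ {ω | ξ n ω * Z (idx n ω) ω = -1}) = 1 := by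
      rw [measure_union hUdisj (hYnm (measurableSet_singleton (-1))),
        hunif n 1 (Or.inl rfl), hunif n (-1) (Or.inr rfl)]
      exact ENNReal.add_halves 1
    have hN : μ (({ω | ξ n ω * Z (idx n ω) ω = 1}
        ∪ {ω | ξ n ω * Z (idx n ω) ω = -1})ᶜ) = 0 := by
      rw [measure_compl hU (measure_ne_top μ _), hUfull, measure_univ, tsub_self]
    have hdecomp : ∀ (A : Set Ω), MeasurableSet[F n] A →
        μ (A ∩ (fun ω => ξ n ω * Z (idx n ω) ω) ⁻¹' T)
          = (if (1 : ℝ) ∈ T then μ A / 2 else 0)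
            + (if (-1 : ℝ) ∈ T then μ A / 2 else 0) := by
      intro A hA
      have hAm : MeasurableSet A := hFle n _ hA
      set S : Set Ω := A ∩ (fun ω => ξ n ω * Z (idx n ω) ω) ⁻¹' T with hS
      have h1 : μ S = μ (S ∩ ({ω | ξ n ω * Z (idx n ω) ω = 1}
          ∪ {ω | ξ n ω * Z (idx n ω) ω = -1})) := by
        rw [← measure_inter_add_diff S hU]
        have : μ (S \ ({ω | ξ n ω * Z (idx n ω) ω = 1}
            ∪ {ω | ξ n ω * Z (idx n ω) ω = -1})) = 0 :=
          measure_mono_null (fun ω hω => hω.2) hN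
        rw [this, add_zero]
      have h2 : S ∩ ({ω | ξ n ω * Z (idx n ω) ω = 1}
          ∪ {ω | ξ n ω * Z (idx n ω) ω = -1})
          = (S ∩ {ω | ξ n ω * Z (idx n ω) ω = 1})
            ∪ (S ∩ {ω | ξ n ω * Z (idx n ω) ω = -1}) :=
        Set.inter_union_distrib_left _ _ _
      have h3 : S ∩ {ω | ξ n ω * Z (idx n ω) ω = 1}
          = if (1 : ℝ) ∈ T then A ∩ {ω | ξ n ω * Z (idx n ω) ω = 1} else ∅ := by
        by_cases h1T : (1 : ℝ) ∈ T
        · simp only [h1T, if_true]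
          ext ω
          simp only [hS, Set.mem_inter_iff, Set.mem_preimage, Set.mem_setOf_eq]
          constructor
          · rintro ⟨⟨hA', _⟩, hy⟩; exact ⟨hA', hy⟩
          · rintro ⟨hA', hy⟩; exact ⟨⟨hA', by rw [hy]; exact h1T⟩, hy⟩
        · simp only [h1T, if_false]
          ext ω
          simp only [hS, Set.mem_inter_iff, Set.mem_preimage, Set.mem_setOf_eq,
            Set.mem_empty_iff_false, iff_false, not_and]
          rintro ⟨_, hy⟩ hy1
          rw [hy1] at hy
          exact h1T hy
      have h4 : S ∩ {ω | ξ n ω * Z (idx n ω) ω = -1}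
          = if (-1 : ℝ) ∈ T then A ∩ {ω | ξ n ω * Z (idx n ω) ω = -1} else ∅ := by
        by_cases h1T : (-1 : ℝ) ∈ T
        · simp only [h1T, if_true]
          ext ω
          simp only [hS, Set.mem_inter_iff, Set.mem_preimage, Set.mem_setOf_eq]
          constructor
          · rintro ⟨⟨hA', _⟩, hy⟩; exact ⟨hA', hy⟩
          · rintro ⟨hA', hy⟩; exact ⟨⟨hA', by rw [hy]; exact h1T⟩, hy⟩
        · simp only [h1T, if_false]
          ext ω
          simp only [hS, Set.mem_inter_iff, Set.mem_preimage, Set.mem_setOf_eq,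
            Set.mem_empty_iff_false, iff_false, not_and]
          rintro ⟨_, hy⟩ hy1
          rw [hy1] at hy
          exact h1T hy
      have hdisj2 : Disjoint (S ∩ {ω | ξ n ω * Z (idx n ω) ω = 1})
          (S ∩ {ω | ξ n ω * Z (idx n ω) ω = -1}) :=
        hUdisj.mono Set.inter_subset_right Set.inter_subset_right
      have hSm : MeasurableSet S := hAm.inter (hYnm hT)
      rw [h1, h2, measure_union hdisj2 (hSm.inter (hYnm (measurableSet_singleton (-1)))),
        h3, h4]
      congr 1
      · by_cases h1T : (1 : ℝ) ∈ T
        · simp only [h1T, if_true]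
          exact keyL n A hA 1 (Or.inl rfl)
        · simp [h1T]
      · by_cases h1T : (-1 : ℝ) ∈ T
        · simp only [h1T, if_true]
          exact keyL n A hA (-1) (Or.inr rfl)
        · simp [h1T]
    have hdecu := hdecomp Set.univ MeasurableSet.univ
    rw [Set.univ_inter] at hdecu
    rw [hdecomp A hA, hdecu, measure_univ]
    by_cases h1 : (1 : ℝ) ∈ T <;> by_cases h2 : (-1 : ℝ) ∈ T <;>
      simp only [h1, h2, if_true, if_false, add_zero, zero_add, mul_zero]
    · rw [ENNReal.add_halves, ENNReal.add_halves, mul_one]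
    · rw [mul_one_div]
    · rw [mul_one_div]
  -- finish
  refine ⟨?_, fun k => ⟨hunif k 1 (Or.inl rfl), hunif k (-1) (Or.inr rfl)⟩⟩
  rw [iIndepFun_iff_measure_inter_preimage_eq_mul]
  intro S sets hsets
  have main : ∀ (N : ℕ) (S : Finset ℕ), (∀ i ∈ S, i < N) → ∀ sets : ℕ → Set ℝ,
      (∀ i ∈ S, MeasurableSet (sets i)) →
      μ (⋂ i ∈ S, (fun ω => ξ i ω * Z (idx i ω) ω) ⁻¹' sets i)
        = ∏ i ∈ S, μ ((fun ω => ξ i ω * Z (idx i ω) ω) ⁻¹' sets i) := by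
    intro N
    induction N with
    | zero =>
      intro S hS sets hsets
      have : S = ∅ := Finset.eq_empty_of_forall_notMem fun i hi =>
        Nat.not_lt_zero i (hS i hi)
      subst this
      simp
    | succ N ih =>
      intro S hS sets hsets
      by_cases hN : N ∈ S
      · have hS' : S = insert N (S.erase N) := (Finset.insert_erase hN).symm
        rw [hS', Finset.set_biInter_insert, Finset.prod_insert (Finset.notMem_erase N S)]
        have hEr : ∀ i ∈ S.erase N, i < N := fun i hi =>
          lt_of_le_of_ne (Nat.lt_succ_iff.1 (hS i (Finset.mem_of_mem_erase hi)))
            (Finset.ne_of_mem_erase hi)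
        have hAF : MeasurableSet[F N]
            (⋂ i ∈ S.erase N, (fun ω => ξ i ω * Z (idx i ω) ω) ⁻¹' sets i) := by
          refine Finset.measurableSet_biInter _ fun i hi => ?_
          have hYi : Measurable[F N] (fun ω => ξ i ω * Z (idx i ω) ω) :=
            (hYF i).mono (hFmono (hEr i hi)) le_rfl
          exact hYi (hsets i (Finset.mem_of_mem_erase hi))
        rw [Set.inter_comm,
          keyL' N _ hAF (sets N) (hsets N hN),
          ih (S.erase N) hEr sets (fun i hi => hsets i (Finset.mem_of_mem_erase hi))]
        ring
      · exact ih S (fun i hi => lt_of_le_of_ne (Nat.lt_succ_iff.1 (hS i hi))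
          (fun h => hN (h ▸ hi))) sets hsets
  exact main (S.sup id + 1) S
    (fun i hi => Nat.lt_succ_of_le (Finset.le_sup (f := id) hi)) sets
    (fun i hi => hsets i hi)
end
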